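/- Let A be the (p+1)×(p+1) matrix over ℚ with A_{i,i+1} = 1 for 0 ≤ i ≤ p−1, A_{p,0} = −1/p, A_{p,p} = (p+1)/p, and all other entries 0. Then the characteristic polynomial of A equals (x−1)²·R(x), where R(x) = Σ_{k=0}^{p-1} ((k+1)/p)·x^k. In particular 1 is an eigenvalue of A of algebraic multiplicity 2. -/

import Mathlib

open Polynomial

/-- The polynomial `R(x) = Σ_{k<p} ((k+1)/p)·x^k`. -/
noncomputable def Rpoly (p : ℕ) : Polynomial ℚ :=
  ∑ k ∈ Finset.range p, C (((k : ℚ) + 1) / p) * X ^ k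

/-- The `(p+1)×(p+1)` matrix of the sandpile recurrence:
superdiagonal `1`s, `A_{p,0} = -1/p`, `A_{p,p} = (p+1)/p`. -/
def Amat (p : ℕ) : Matrix (Fin (p + 1)) (Fin (p + 1)) ℚ :=
  Matrix.of fun i j =>
    if (i : ℕ) < p ∧ (j : ℕ) = (i : ℕ) + 1 then 1
    else if (i : ℕ) = p ∧ (j : ℕ) = 0 then -1 / p
    else if (i : ℕ) = p ∧ (j : ℕ) = p then ((p : ℚ) + 1) / p
    else 0

/-- Key polynomial identity: `(X-1)² · Σ_{k<p} (k+1) X^k = p X^{p+1} - (p+1) X^p + 1`. -/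
lemma key_sum (p : ℕ) :
    (X - 1) ^ 2 * (∑ k ∈ Finset.range p, C ((k : ℚ) + 1) * X ^ k) =
      C (p : ℚ) * X ^ (p + 1) - C ((p : ℚ) + 1) * X ^ p + 1 := by
  induction p with
  | zero => simp
  | succ n ih =>
    rw [Finset.sum_range_succ, mul_add, ih]
    push_cast
    simp only [C_add, C_1, C_eq_natCast]
    ring

/-- The characteristic polynomial of `Amat` computed explicitly. -/
lemma charpoly_Amat_explicit (q : ℕ) :
    (Amat (q + 1)).charpoly =
      X ^ (q + 2) - C (((q : ℚ) + 2) / (q + 1)) * X ^ (q + 1) + C (1 / ((q : ℚ) + 1)) := by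
  set p : ℕ := q + 1 with hpdef
  set M := Matrix.charmatrix (Amat p) with hM
  have hdet : (Amat p).charpoly = M.det := rfl
  rw [hdet, Matrix.det_succ_column_zero]
  have h0last : (0 : Fin (p + 1)) ≠ Fin.last p := by
    simp [Fin.ext_iff, hpdef]
  -- vanishing of other terms
  have hvan : ∀ x ∈ (Finset.univ : Finset (Fin (p + 1))),
      x ∉ ({0, Fin.last p} : Finset (Fin (p + 1))) →
      (-1 : ℚ[X]) ^ (x : ℕ) * M x 0 * (M.submatrix x.succAbove Fin.succ).det = 0 := by
    intro x _ hx
    simp only [Finset.mem_insert, Finset.mem_singleton, not_or] at hx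
    have hx0 : x ≠ 0 := hx.1
    have hxl : (x : ℕ) ≠ p := fun h => hx.2 (Fin.ext (by simpa using h))
    have : M x 0 = 0 := by
      rw [hM, Matrix.charmatrix_apply_ne _ _ _ hx0]
      have : Amat p x 0 = 0 := by
        simp [Amat, hxl, hpdef, Fin.val_zero]
        intro h; exact absurd h (by omega)
      rw [this, map_zero, neg_zero]
    rw [this]; ring
  rw [← Finset.sum_subset (Finset.subset_univ ({0, Fin.last p} : Finset (Fin (p + 1)))) hvan,
    Finset.sum_pair h0last]
  -- entries
  have hM00 : M 0 0 = X := by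
    rw [hM, Matrix.charmatrix_apply_eq]
    have : Amat p 0 0 = 0 := by simp [Amat, hpdef]
    rw [this, map_zero, sub_zero]
  have hMl0 : M (Fin.last p) 0 = C (1 / (p : ℚ)) := by
    rw [hM, Matrix.charmatrix_apply_ne _ _ _ h0last.symm]
    have : Amat p (Fin.last p) 0 = -1 / p := by simp [Amat, hpdef]
    rw [this, show (-1 / (p : ℚ)) = -(1 / p) by rw [neg_div], map_neg, neg_neg]
  -- minor at row 0 : upper triangular
  have hminor0 : (M.submatrix (Fin.succAbove 0) Fin.succ).det =
      X ^ q * (X - C (((p : ℚ) + 1) / p)) := by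
    rw [Matrix.det_of_upperTriangular]
    · have hdiag : ∀ a : Fin p, (M.submatrix (Fin.succAbove 0) Fin.succ) a a =
          X - C (if (a : ℕ) + 1 = p then ((p : ℚ) + 1) / p else 0) := by
        intro a
        rw [Matrix.submatrix_apply, Fin.succAbove_zero, hM, Matrix.charmatrix_apply_eq]
        congr 1
        · congr 1
          simp only [Amat, Matrix.of_apply, Fin.val_succ]
          have h1 : ¬((a : ℕ) + 1 < p ∧ (a : ℕ) + 1 = (a : ℕ) + 1 + 1) := by omega
          have h2 : ¬((a : ℕ) + 1 = p ∧ (a : ℕ) + 1 = 0) := by omega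
          rw [if_neg h1, if_neg h2]
          by_cases h : (a : ℕ) + 1 = p
          · simp [h]
          · simp [h]
      simp_rw [hdiag]
      rw [hpdef, Fin.prod_univ_castSucc]
      have h1 : ∀ a : Fin q, ((a.castSucc : ℕ) + 1 = q + 1) = False := by
        intro a
        simp only [Fin.coe_castSucc, eq_iff_iff, iff_false]
        omega
      simp only [h1, if_false, Fin.val_last, if_pos rfl, map_zero, sub_zero]
      rw [Finset.prod_const, Finset.card_univ, Fintype.card_fin]
      push_cast
      ring
    · intro i j hji
      have hji' : (j : ℕ) < (i : ℕ) := hji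
      rw [Matrix.submatrix_apply, Fin.succAbove_zero, hM,
        Matrix.charmatrix_apply_ne _ _ _
          (by intro h; have := congrArg Fin.val h; simp at this; omega)]
      have : Amat p i.succ j.succ = 0 := by
        simp only [Amat, Matrix.of_apply, Fin.val_succ]
        have hi : (i : ℕ) < p := i.isLt
        rw [if_neg (by omega), if_neg (by omega), if_neg (by omega)]
      rw [this, map_zero, neg_zero]
  -- minor at last row : lower triangular
  have hminorL : (M.submatrix (Fin.last p).succAbove Fin.succ).det = (-1 : ℚ[X]) ^ p := by
    rw [Matrix.det_of_lowerTriangular]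
    · have hdiag : ∀ a : Fin p, (M.submatrix (Fin.last p).succAbove Fin.succ) a a = -1 := by
        intro a
        rw [Matrix.submatrix_apply, Fin.succAbove_last, hM,
          Matrix.charmatrix_apply_ne _ _ _
            (by intro h; have := congrArg Fin.val h; simp at this)]
        have : Amat p a.castSucc a.succ = 1 := by
          simp only [Amat, Matrix.of_apply, Fin.coe_castSucc, Fin.val_succ]
          simp [a.isLt]
        rw [this, map_one]
      simp_rw [hdiag]
      rw [Finset.prod_const, Finset.card_univ, Fintype.card_fin]
    · intro i j hij
      have hij' : (i : ℕ) < (j : ℕ) := hij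
      rw [Matrix.submatrix_apply, Fin.succAbove_last, hM,
        Matrix.charmatrix_apply_ne _ _ _
          (by intro h; have := congrArg Fin.val h; simp at this; omega)]
      have : Amat p i.castSucc j.succ = 0 := by
        simp only [Amat, Matrix.of_apply, Fin.coe_castSucc, Fin.val_succ]
        have hi : (i : ℕ) < p := i.isLt
        rw [if_neg (by omega), if_neg (by omega), if_neg (by omega)]
      rw [this, map_zero, neg_zero]
  rw [hM00, hMl0, hminor0, hminorL]
  simp only [Fin.val_zero, pow_zero, one_mul, Fin.val_last]
  have hsgn : (-1 : ℚ[X]) ^ p * C (1 / (p : ℚ)) * (-1 : ℚ[X]) ^ p = C (1 / (p : ℚ)) := by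
    rw [mul_comm ((-1 : ℚ[X]) ^ p), mul_assoc, ← pow_add]
    rw [(Even.neg_one_pow ⟨p, by ring⟩ : (-1 : ℚ[X]) ^ (p + p) = 1), mul_one]
  rw [hsgn, hpdef]
  push_cast
  ring

/-- The characteristic polynomial of `A` is `(X-1)² · R(X)`; in particular `1`
is an eigenvalue of `A` of algebraic multiplicity `2`. -/
theorem Amat_charpoly (p : ℕ) (hp : 1 ≤ p) :
    (Amat p).charpoly = (X - 1) ^ 2 * Rpoly p ∧
    (Amat p).charpoly.rootMultiplicity 1 = 2 := by
  obtain ⟨q, rfl⟩ : ∃ q, p = q + 1 := ⟨p - 1, by omega⟩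
  have hR : Rpoly (q + 1) = C (1 / ((q : ℚ) + 1)) *
      ∑ k ∈ Finset.range (q + 1), C ((k : ℚ) + 1) * X ^ k := by
    rw [Rpoly, Finset.mul_sum]
    refine Finset.sum_congr rfl fun k _ => ?_
    rw [← mul_assoc, ← C_mul]
    congr 2
    push_cast
    ring
  have hfac : (X - 1) ^ 2 * Rpoly (q + 1) =
      X ^ (q + 2) - C (((q : ℚ) + 2) / (q + 1)) * X ^ (q + 1) + C (1 / ((q : ℚ) + 1)) := by
    rw [hR, mul_left_comm, key_sum]
    push_cast
    rw [mul_add, mul_sub, ← mul_assoc, ← mul_assoc, ← C_mul, ← C_mul, mul_one]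
    rw [show (1 / ((q : ℚ) + 1)) * ((q : ℚ) + 1) = 1 by field_simp]
    rw [show (1 / ((q : ℚ) + 1)) * ((q : ℚ) + 1 + 1) = ((q : ℚ) + 2) / ((q : ℚ) + 1) by ring]
    rw [C_1, one_mul]
  have hcp : (Amat (q + 1)).charpoly = (X - 1) ^ 2 * Rpoly (q + 1) :=
    (charpoly_Amat_explicit q).trans hfac.symm
  refine ⟨hcp, ?_⟩
  have hRe : 0 < (Rpoly (q + 1)).eval 1 := by
    rw [Rpoly]
    simp only [eval_finset_sum, eval_mul, eval_C, eval_pow, eval_X, one_pow, mul_one]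
    apply Finset.sum_pos
    · intro k _
      apply div_pos (by positivity) (by positivity)
    · exact ⟨0, Finset.mem_range.mpr (by omega)⟩
  have hRne : Rpoly (q + 1) ≠ 0 := by
    intro h
    rw [h] at hRe
    simp at hRe
  have hXne : ((X : ℚ[X]) - 1) ≠ 0 := by
    rw [← C_1]
    exact X_sub_C_ne_zero 1
  rw [hcp, rootMultiplicity_mul (mul_ne_zero (pow_ne_zero 2 hXne) hRne)]
  rw [show ((X : ℚ[X]) - 1) = X - C 1 by rw [C_1], rootMultiplicity_X_sub_C_pow]
  rw [rootMultiplicity_eq_zero (fun h => hRe.ne' h)]
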